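/- Let τ > 0, N ∈ ℕ, and let H : ℝ^N → [0,∞) and F : ℝ^N → [0,∞) be functions. Let (v^k)_{k≥0} be a sequence in ℝ^N and define the entropy production P(v^k) := −(H(v^k) − H(v^{k−1}))/τ for k ≥ 1. Assume: (A1) there exist constants C_m, C_M > 0 such that C_m·F(v^k) ≤ P(v^k) ≤ C_M·F(v^k) for all k ≥ 1; (A2) there exists κ > 0 such that F(v^k) − F(v^{k−1}) ≤ −τκ·F(v^k) for all k ≥ 1; (A3) H(v^k) → 0 as k → ∞. Then, with λ := (C_m/C_M)·κ, it holds that H(v^k) ≤ (1 + λτ)^{−k}·H(v^0) for all k ∈ ℕ; equivalently, H(v^k) ≤ e^{−ηλkτ}·H(v^0) with η := log(1 + τλ)/(τλ) ∈ (0,1). -/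

import Mathlib

open Filter

/-- Abstract discrete Bakry–Emery method. -/
theorem discrete_bakry_emery
    (τ : ℝ) (hτ : 0 < τ) (N : ℕ)
    (H F : (Fin N → ℝ) → ℝ)
    (hH : ∀ w, 0 ≤ H w) (hF : ∀ w, 0 ≤ F w)
    (v : ℕ → Fin N → ℝ)
    (Cm CM : ℝ) (hCm : 0 < Cm) (hCM : 0 < CM)
    (hA1 : ∀ k : ℕ, 1 ≤ k →
      Cm * F (v k) ≤ -(H (v k) - H (v (k - 1))) / τ ∧
      -(H (v k) - H (v (k - 1))) / τ ≤ CM * F (v k))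
    (κ : ℝ) (hκ : 0 < κ)
    (hA2 : ∀ k : ℕ, 1 ≤ k → F (v k) - F (v (k - 1)) ≤ -(τ * κ) * F (v k))
    (hA3 : Tendsto (fun k => H (v k)) atTop (nhds 0)) :
    ∀ k : ℕ, H (v k) ≤ (1 + (Cm / CM) * κ * τ)⁻¹ ^ k * H (v 0) ∧
      H (v k) ≤ Real.exp (-(Real.log (1 + τ * ((Cm / CM) * κ)) / (τ * ((Cm / CM) * κ)))
        * ((Cm / CM) * κ) * k * τ) * H (v 0) := by
  have hlam : 0 < (Cm / CM) * κ := mul_pos (div_pos hCm hCM) hκ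
  set lam := (Cm / CM) * κ with hlam_def
  -- one-step entropy decrease controlled by F difference
  have hstep : ∀ j : ℕ, H (v j) - H (v (j+1)) ≤ (CM/κ) * (F (v j) - F (v (j+1))) := by
    intro j
    have h1 := (hA1 (j+1) (by omega)).2
    have h2 := hA2 (j+1) (by omega)
    simp only [Nat.add_sub_cancel] at h1 h2
    rw [div_le_iff₀ hτ] at h1
    have h1' : H (v j) - H (v (j+1)) ≤ τ * (CM * F (v (j+1))) := by nlinarith
    have h2' : τ * κ * F (v (j+1)) ≤ F (v j) - F (v (j+1)) := by nlinarith
    have h3 : τ * F (v (j+1)) ≤ (F (v j) - F (v (j+1))) / κ := by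
      rw [le_div_iff₀ hκ]; nlinarith
    calc H (v j) - H (v (j+1)) ≤ τ * (CM * F (v (j+1))) := h1'
      _ = CM * (τ * F (v (j+1))) := by ring
      _ ≤ CM * ((F (v j) - F (v (j+1))) / κ) := mul_le_mul_of_nonneg_left h3 hCM.le
      _ = (CM/κ) * (F (v j) - F (v (j+1))) := by ring
  -- telescoped bound
  have htel : ∀ k m : ℕ, H (v k) - H (v (k+m)) ≤ (CM/κ) * (F (v k) - F (v (k+m))) := by
    intro k m
    induction m with
    | zero => simp
    | succ m ih =>
      have h := hstep (k+m)
      have : H (v k) - H (v (k+m+1)) ≤ (CM/κ) * (F (v k) - F (v (k+m+1))) := by linarith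
      simpa [← Nat.add_assoc] using this
  -- key: κ H ≤ CM F
  have hkey : ∀ k : ℕ, κ * H (v k) ≤ CM * F (v k) := by
    intro k
    have hpos : 0 < CM/κ := div_pos hCM hκ
    have hbound : ∀ m : ℕ, H (v k) ≤ H (v (k+m)) + (CM/κ) * F (v k) := by
      intro m
      have h := htel k m
      have hF' := hF (v (k+m))
      nlinarith
    have hsub : Tendsto (fun m => H (v (k+m))) atTop (nhds 0) := by
      have h := hA3.comp (tendsto_add_atTop_nat k)
      simpa [Function.comp_def, Nat.add_comm] using h
    have hlim : Tendsto (fun m => H (v (k+m)) + (CM/κ) * F (v k)) atTop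
        (nhds (0 + (CM/κ) * F (v k))) := hsub.add tendsto_const_nhds
    rw [zero_add] at hlim
    have hHF : H (v k) ≤ (CM/κ) * F (v k) := ge_of_tendsto' hlim hbound
    rw [div_mul_eq_mul_div, le_div_iff₀ hκ] at hHF
    linarith
  -- one-step geometric decay of H
  have hdec : ∀ k : ℕ, (1 + lam * τ) * H (v (k+1)) ≤ H (v k) := by
    intro k
    have h1 := (hA1 (k+1) (by omega)).1
    simp only [Nat.add_sub_cancel] at h1
    rw [le_div_iff₀ hτ] at h1
    have hk := hkey (k+1)
    have hlam' : lam = (Cm / CM) * κ := hlam_def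
    have hCM' : CM ≠ 0 := hCM.ne'
    -- τ Cm F ≤ H k - H (k+1), and κ H(k+1) ≤ CM F(k+1)
    have hFge : Cm * F (v (k+1)) ≥ lam * H (v (k+1)) := by
      rw [hlam_def]
      rw [div_mul_eq_mul_div, div_mul_eq_mul_div, ge_iff_le, div_le_iff₀ hCM]
      nlinarith
    nlinarith [hH (v (k+1)), hF (v (k+1))]
  have hone : 0 < 1 + lam * τ := by positivity
  have hgeo : ∀ k : ℕ, H (v k) ≤ (1 + lam * τ)⁻¹ ^ k * H (v 0) := by
    intro k
    induction k with
    | zero => simp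
    | succ k ih =>
      have h := hdec k
      have h' : H (v (k+1)) ≤ (1 + lam * τ)⁻¹ * H (v k) := by
        rw [inv_mul_eq_div, le_div_iff₀ hone]; linarith
      calc H (v (k+1)) ≤ (1 + lam * τ)⁻¹ * H (v k) := h'
        _ ≤ (1 + lam * τ)⁻¹ * ((1 + lam * τ)⁻¹ ^ k * H (v 0)) := by
            apply mul_le_mul_of_nonneg_left ih (by positivity)
        _ = (1 + lam * τ)⁻¹ ^ (k+1) * H (v 0) := by ring
  intro k
  have heq : Real.exp (-(Real.log (1 + τ * lam) / (τ * lam)) * lam * k * τ)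
      = (1 + lam * τ)⁻¹ ^ k := by
    have hτlam : τ * lam ≠ 0 := by positivity
    have h1 : (-(Real.log (1 + τ * lam) / (τ * lam)) * lam * k * τ)
        = (k : ℝ) * (-Real.log (1 + τ * lam)) := by
      field_simp
    rw [h1, Real.exp_nat_mul, Real.exp_neg, Real.exp_log (by nlinarith : (0:ℝ) < 1 + τ * lam)]
    ring_nf
  have hgk := hgeo k
  refine ⟨hgk, ?_⟩
  rw [heq]
  exact hgk
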